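/- Let f : ℝⁿ → ℝ be differentiable, let α > 0, and define the gradient iterates x_{k+1} = x_k − α ∇f(x_k). If there is a lower bound α ≥ α̲ > 0 on the step size and the total length ∑_{i=0}^∞ ‖x_{i+1} − x_i‖ is finite, then for all k, min_{i=0,…,k} ‖∇f(x_i)‖ ≤ (2/α̲)/(k+2) · ∑_{i=⌊k/2⌋}^∞ ‖x_{i+1} − x_i‖. -/
import Mathlib


open scoped BigOperators

theorem stmt1 {n : ℕ} (f : EuclideanSpace ℝ (Fin n) → ℝ)
    (hf : Differentiable ℝ f)
    (x : ℕ → EuclideanSpace ℝ (Fin n)) (α αmin : ℝ)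
    (hαmin : 0 < αmin) (hα : αmin ≤ α)
    (hrec : ∀ k, x (k + 1) = x k - α • gradient f (x k))
    (hsum : Summable fun i => ‖x (i + 1) - x i‖) (k : ℕ) :
    (Finset.Icc 0 k).inf' (by simp) (fun i => ‖gradient f (x i)‖) ≤
      (2 / αmin) / ((k : ℝ) + 2) * ∑' i : ℕ, ‖x (k / 2 + i + 1) - x (k / 2 + i)‖ := by
  have hα0 : 0 < α := lt_of_lt_of_le hαmin hα
  set m := (Finset.Icc 0 k).inf' (by simp) (fun i => ‖gradient f (x i)‖) with hm
  have hm0 : 0 ≤ m := by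
    obtain ⟨i, hi, h⟩ := Finset.exists_mem_eq_inf' (s := Finset.Icc 0 k) (by simp)
      (fun i => ‖gradient f (x i)‖)
    rw [hm, h]; positivity
  have hsum' : Summable fun i => ‖x (k / 2 + i + 1) - x (k / 2 + i)‖ :=
    hsum.comp_injective (add_right_injective (k / 2))
  have key : ∀ j ∈ Finset.Icc 0 k, αmin * m ≤ ‖x (j + 1) - x j‖ := by
    intro j hj
    have h1 : m ≤ ‖gradient f (x j)‖ := Finset.inf'_le _ hj
    have h2 : ‖x (j + 1) - x j‖ = α * ‖gradient f (x j)‖ := by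
      rw [hrec j]
      have h3 : x j - α • gradient f (x j) - x j = -(α • gradient f (x j)) := by abel
      rw [h3, norm_neg, norm_smul, Real.norm_eq_abs, abs_of_pos hα0]
    rw [h2]
    exact mul_le_mul hα h1 hm0 hα0.le
  set N : ℕ := k - k / 2 + 1 with hN
  have hlow : (N : ℝ) * (αmin * m) ≤
      ∑ i ∈ Finset.range N, ‖x (k / 2 + i + 1) - x (k / 2 + i)‖ := by
    have := Finset.card_nsmul_le_sum (Finset.range N)
      (fun i => ‖x (k / 2 + i + 1) - x (k / 2 + i)‖) (αmin * m)
      (fun i hi => by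
        apply key
        simp only [Finset.mem_range] at hi
        simp only [Finset.mem_Icc]
        omega)
    simpa [nsmul_eq_mul] using this
  have hpartial : ∑ i ∈ Finset.range N, ‖x (k / 2 + i + 1) - x (k / 2 + i)‖ ≤
      ∑' i : ℕ, ‖x (k / 2 + i + 1) - x (k / 2 + i)‖ :=
    Summable.sum_le_tsum _ (fun i _ => norm_nonneg _) hsum'
  have hS0 : (N : ℝ) * (αmin * m) ≤ ∑' i : ℕ, ‖x (k / 2 + i + 1) - x (k / 2 + i)‖ :=
    le_trans hlow hpartial
  have hNk : (k : ℝ) + 2 ≤ 2 * (N : ℝ) := by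
    have : k + 2 ≤ 2 * N := by omega
    exact_mod_cast this
  rw [div_div, div_mul_eq_mul_div, le_div_iff₀ (by positivity)]
  calc m * (αmin * ((k : ℝ) + 2)) ≤ m * (αmin * (2 * N)) := by
        apply mul_le_mul_of_nonneg_left (mul_le_mul_of_nonneg_left hNk hαmin.le) hm0
    _ = 2 * ((N : ℝ) * (αmin * m)) := by ring
    _ ≤ 2 * ∑' i : ℕ, ‖x (k / 2 + i + 1) - x (k / 2 + i)‖ := by linarith
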